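/- Let G and H be finite groups of coprime order such that G and H are Beauville groups and G is a purely non-strongly real Beauville group. Then the direct product G × H is a purely non-strongly real Beauville group: it admits a Beauville structure, and none of its Beauville structures is strongly real. -/

import Mathlib

/-- `beauvilleSigma x y` is Σ(x,y): the set of all conjugates of all powers of
`x`, `y` and `x*y` in the group `G`. -/
def beauvilleSigma {G : Type*} [Group G] (x y : G) : Set G :=
  {a | ∃ (i : ℕ) (g : G),
      a = g * x ^ i * g⁻¹ ∨ a = g * y ^ i * g⁻¹ ∨ a = g * (x * y) ^ i * g⁻¹}

/-- `{(x₁,y₁),(x₂,y₂)}` is a Beauville structure for `G`: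
both pairs generate `G` and `Σ(x₁,y₁) ∩ Σ(x₂,y₂) = {1}`. -/
def IsBeauvilleStructure {G : Type*} [Group G] (x₁ y₁ x₂ y₂ : G) : Prop :=
  Subgroup.closure {x₁, y₁} = ⊤ ∧ Subgroup.closure {x₂, y₂} = ⊤ ∧
    beauvilleSigma x₁ y₁ ∩ beauvilleSigma x₂ y₂ = {1}

/-- A Beauville structure `{(x₁,y₁),(x₂,y₂)}` is strongly real if there are an
automorphism `φ` of `G` and elements `g₁ g₂ : G` with
`gᵢ * φ xᵢ * gᵢ⁻¹ = xᵢ⁻¹` and `gᵢ * φ yᵢ * gᵢ⁻¹ = yᵢ⁻¹` for `i = 1, 2`. -/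
def IsStronglyRealStructure {G : Type*} [Group G] (x₁ y₁ x₂ y₂ : G) : Prop :=
  ∃ (φ : G ≃* G) (g₁ g₂ : G),
    g₁ * φ x₁ * g₁⁻¹ = x₁⁻¹ ∧ g₁ * φ y₁ * g₁⁻¹ = y₁⁻¹ ∧
    g₂ * φ x₂ * g₂⁻¹ = x₂⁻¹ ∧ g₂ * φ y₂ * g₂⁻¹ = y₂⁻¹

section Aux

variable {G H : Type*} [Group G] [Group H]

lemma one_mem_sigma (x y : G) : (1 : G) ∈ beauvilleSigma x y :=
  ⟨0, 1, Or.inl (by simp)⟩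

lemma sigma_fst {x y a : G × H} (h : a ∈ beauvilleSigma x y) :
    a.1 ∈ beauvilleSigma x.1 y.1 := by
  obtain ⟨i, g, h | h | h⟩ := h
  · exact ⟨i, g.1, Or.inl (by rw [h]; simp)⟩
  · exact ⟨i, g.1, Or.inr (Or.inl (by rw [h]; simp))⟩
  · exact ⟨i, g.1, Or.inr (Or.inr (by rw [h]; simp))⟩

lemma sigma_snd {x y a : G × H} (h : a ∈ beauvilleSigma x y) :
    a.2 ∈ beauvilleSigma x.2 y.2 := by
  obtain ⟨i, g, h | h | h⟩ := h
  · exact ⟨i, g.2, Or.inl (by rw [h]; simp)⟩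
  · exact ⟨i, g.2, Or.inr (Or.inl (by rw [h]; simp))⟩
  · exact ⟨i, g.2, Or.inr (Or.inr (by rw [h]; simp))⟩

lemma pow_mem_sigma {x y a : G} (h : a ∈ beauvilleSigma x y) (n : ℕ) :
    a ^ n ∈ beauvilleSigma x y := by
  obtain ⟨i, g, h | h | h⟩ := h
  · exact ⟨i * n, g, Or.inl (by rw [h, conj_pow, ← pow_mul])⟩
  · exact ⟨i * n, g, Or.inr (Or.inl (by rw [h, conj_pow, ← pow_mul]))⟩
  · exact ⟨i * n, g, Or.inr (Or.inr (by rw [h, conj_pow, ← pow_mul]))⟩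

lemma exists_pow_proj (hco : Nat.Coprime (Nat.card G) (Nat.card H)) :
    ∃ N : ℕ, (∀ g : G, g ^ N = g) ∧ (∀ h : H, h ^ N = 1) := by
  obtain ⟨k, hk1, hk2⟩ := Nat.chineseRemainder hco 1 0
  refine ⟨k, fun g => ?_, fun h => ?_⟩
  · have hd : orderOf g ∣ Nat.card G := orderOf_dvd_of_pow_eq_one pow_card_eq_one'
    have := pow_eq_pow_iff_modEq.mpr (hk1.of_dvd hd)
    rwa [pow_one] at this
  · have hd : orderOf h ∣ Nat.card H := orderOf_dvd_of_pow_eq_one pow_card_eq_one'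
    have := pow_eq_pow_iff_modEq.mpr (hk2.of_dvd hd)
    rwa [pow_zero] at this

lemma sigma_lift {N : ℕ} (hN1 : ∀ g : G, g ^ N = g) (hN2 : ∀ h : H, h ^ N = 1)
    {x y : G × H} {c : G} (hc : c ∈ beauvilleSigma x.1 y.1) :
    ((c, 1) : G × H) ∈ beauvilleSigma x y := by
  obtain ⟨i, g, hc | hc | hc⟩ := hc
  · have hz : (((g, 1) : G × H) * x ^ i * ((g, 1) : G × H)⁻¹) ^ N = ((c, 1) : G × H) := by
      ext
      · simp [← hc, hN1]
      · simp [hN2]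
    rw [← hz]
    exact pow_mem_sigma ⟨i, (g, 1), Or.inl rfl⟩ N
  · have hz : (((g, 1) : G × H) * y ^ i * ((g, 1) : G × H)⁻¹) ^ N = ((c, 1) : G × H) := by
      ext
      · simp [← hc, hN1]
      · simp [hN2]
    rw [← hz]
    exact pow_mem_sigma ⟨i, (g, 1), Or.inr (Or.inl rfl)⟩ N
  · have hz : (((g, 1) : G × H) * (x * y) ^ i * ((g, 1) : G × H)⁻¹) ^ N = ((c, 1) : G × H) := by
      ext
      · simp [← hc, hN1]
      · simp [hN2]
    rw [← hz]
    exact pow_mem_sigma ⟨i, (g, 1), Or.inr (Or.inr rfl)⟩ N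

lemma phi_inl_snd [Finite G] [Finite H] (hco : Nat.Coprime (Nat.card G) (Nat.card H))
    (φ : (G × H) ≃* (G × H)) (g : G) : (φ (g, 1)).2 = 1 := by
  have h1 : (φ (g, 1)) ^ Nat.card G = 1 := by
    rw [← map_pow, show ((g, 1) : G × H) ^ Nat.card G = 1 by
      ext <;> simp [pow_card_eq_one'], map_one]
  have h2 : ((φ (g, 1)).2) ^ Nat.card G = 1 := by
    have := congrArg Prod.snd h1; simpa using this
  have hd1 : orderOf (φ (g, 1)).2 ∣ Nat.card G := orderOf_dvd_of_pow_eq_one h2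
  have hd2 : orderOf (φ (g, 1)).2 ∣ Nat.card H := orderOf_dvd_of_pow_eq_one pow_card_eq_one'
  exact orderOf_eq_one_iff.mp (Nat.eq_one_of_dvd_coprimes hco hd1 hd2)

lemma phi_inr_fst [Finite G] [Finite H] (hco : Nat.Coprime (Nat.card G) (Nat.card H))
    (φ : (G × H) ≃* (G × H)) (h : H) : (φ (1, h)).1 = 1 := by
  have h1 : (φ (1, h)) ^ Nat.card H = 1 := by
    rw [← map_pow, show ((1, h) : G × H) ^ Nat.card H = 1 by
      ext <;> simp [pow_card_eq_one'], map_one]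
  have h2 : ((φ (1, h)).1) ^ Nat.card H = 1 := by
    have := congrArg Prod.fst h1; simpa using this
  have hd1 : orderOf (φ (1, h)).1 ∣ Nat.card H := orderOf_dvd_of_pow_eq_one h2
  have hd2 : orderOf (φ (1, h)).1 ∣ Nat.card G := orderOf_dvd_of_pow_eq_one pow_card_eq_one'
  exact orderOf_eq_one_iff.mp (Nat.eq_one_of_dvd_coprimes hco hd2 hd1)

lemma exists_psi [Finite G] [Finite H] (hco : Nat.Coprime (Nat.card G) (Nat.card H))
    (φ : (G × H) ≃* (G × H)) : ∃ ψ : G ≃* G, ∀ z : G × H, (φ z).1 = ψ z.1 := by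
  have h2 := phi_inl_snd hco φ
  have h1 := phi_inr_fst hco φ
  let f : G →* G :=
    { toFun := fun g => (φ (g, 1)).1
      map_one' := by
        show (φ ((1 : G), (1 : H))).1 = 1
        rw [show ((1 : G), (1 : H)) = (1 : G × H) from rfl, map_one, Prod.fst_one]
      map_mul' := fun a b => by
        show (φ ((a * b : G), (1 : H))).1 = (φ (a, 1)).1 * (φ (b, 1)).1
        rw [show ((a * b : G), (1 : H)) = (a, 1) * (b, 1) by simp, map_mul, Prod.fst_mul] }
  have hinj : Function.Injective f := by
    intro a b hab
    have : φ (a, 1) = φ (b, 1) := Prod.ext hab (by rw [h2, h2])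
    have := φ.injective this
    exact congrArg Prod.fst this
  refine ⟨MulEquiv.ofBijective f (Finite.injective_iff_bijective.mp hinj), fun z => ?_⟩
  have hz : z = (z.1, 1) * (1, z.2) := by simp
  calc (φ z).1 = (φ ((z.1, 1) * (1, z.2))).1 := by rw [← hz]
    _ = (φ (z.1, 1)).1 * (φ (1, z.2)).1 := by rw [map_mul, Prod.fst_mul]
    _ = (φ (z.1, 1)).1 := by rw [h1, mul_one]
    _ = f z.1 := rfl

end Aux

/-- if `G` and `H` are finite Beauville groups of coprime order and `G` is
purely non-strongly real (no Beauville structure of `G` is strongly real), then `G × H`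
is a purely non-strongly real Beauville group: it admits a Beauville structure and none
of its Beauville structures is strongly real. -/
theorem prod_purely_non_strongly_real
    (G H : Type*) [Group G] [Group H] [Finite G] [Finite H]
    (hco : Nat.Coprime (Nat.card G) (Nat.card H))
    (hG : ∃ x₁ y₁ x₂ y₂ : G, IsBeauvilleStructure x₁ y₁ x₂ y₂)
    (hH : ∃ u₁ v₁ u₂ v₂ : H, IsBeauvilleStructure u₁ v₁ u₂ v₂)
    (hGpure : ∀ x₁ y₁ x₂ y₂ : G,
      IsBeauvilleStructure x₁ y₁ x₂ y₂ → ¬ IsStronglyRealStructure x₁ y₁ x₂ y₂) :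
    (∃ a₁ b₁ a₂ b₂ : G × H, IsBeauvilleStructure a₁ b₁ a₂ b₂) ∧
    ∀ a₁ b₁ a₂ b₂ : G × H,
      IsBeauvilleStructure a₁ b₁ a₂ b₂ → ¬ IsStronglyRealStructure a₁ b₁ a₂ b₂ := by
  obtain ⟨x₁, y₁, x₂, y₂, hGc1, hGc2, hGs⟩ := hG
  obtain ⟨u₁, v₁, u₂, v₂, hHc1, hHc2, hHs⟩ := hH
  obtain ⟨N, hN1, hN2⟩ := exists_pow_proj hco
  obtain ⟨M, hM1, hM2⟩ := exists_pow_proj hco.symm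
  -- generation lemma for product pairs
  have gen : ∀ (x y : G) (u v : H), Subgroup.closure {x, y} = ⊤ →
      Subgroup.closure {u, v} = ⊤ →
      Subgroup.closure {((x, u) : G × H), (y, v)} = ⊤ := by
    intro x y u v hxy huv
    rw [eq_top_iff]
    set K := Subgroup.closure {((x, u) : G × H), (y, v)} with hK
    have hx : ((x, u) : G × H) ∈ K := Subgroup.subset_closure (by simp)
    have hy : ((y, v) : G × H) ∈ K := Subgroup.subset_closure (by simp)
    have hx1 : ((x, (1 : H)) : G × H) ∈ K := by
      have h := K.pow_mem hx N
      rwa [show ((x, u) : G × H) ^ N = (x, 1) from Prod.ext (by simp [hN1]) (by simp [hN2])] at h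
    have hy1 : ((y, (1 : H)) : G × H) ∈ K := by
      have h := K.pow_mem hy N
      rwa [show ((y, v) : G × H) ^ N = (y, 1) from Prod.ext (by simp [hN1]) (by simp [hN2])] at h
    have hu1 : (((1 : G), u) : G × H) ∈ K := by
      have h := K.pow_mem hx M
      rwa [show ((x, u) : G × H) ^ M = (1, u) from Prod.ext (by simp [hM2]) (by simp [hM1])] at h
    have hv1 : (((1 : G), v) : G × H) ∈ K := by
      have h := K.pow_mem hy M
      rwa [show ((y, v) : G × H) ^ M = (1, v) from Prod.ext (by simp [hM2]) (by simp [hM1])] at h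
    have hG1 : ∀ g : G, ((g, (1 : H)) : G × H) ∈ K := by
      intro g
      have hg : g ∈ Subgroup.closure {x, y} := hxy ▸ Subgroup.mem_top g
      have hmem : ((g, (1 : H)) : G × H) ∈
          Subgroup.map (MonoidHom.inl G H) (Subgroup.closure {x, y}) := ⟨g, hg, rfl⟩
      rw [MonoidHom.map_closure, Set.image_pair] at hmem
      have hle : Subgroup.closure {MonoidHom.inl G H x, MonoidHom.inl G H y} ≤ K := by
        rw [Subgroup.closure_le]
        rintro z (rfl | rfl)
        · exact hx1
        · exact hy1
      exact hle hmem
    have hH1 : ∀ h : H, (((1 : G), h) : G × H) ∈ K := by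
      intro h
      have hg : h ∈ Subgroup.closure {u, v} := huv ▸ Subgroup.mem_top h
      have hmem : (((1 : G), h) : G × H) ∈
          Subgroup.map (MonoidHom.inr G H) (Subgroup.closure {u, v}) := ⟨h, hg, rfl⟩
      rw [MonoidHom.map_closure, Set.image_pair] at hmem
      have hle : Subgroup.closure {MonoidHom.inr G H u, MonoidHom.inr G H v} ≤ K := by
        rw [Subgroup.closure_le]
        rintro z (rfl | rfl)
        · exact hu1
        · exact hv1
      exact hle hmem
    rintro ⟨g, h⟩ -
    rw [show ((g, h) : G × H) = (g, 1) * (1, h) by simp]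
    exact K.mul_mem (hG1 g) (hH1 h)
  constructor
  · -- existence of a Beauville structure on G × H
    refine ⟨(x₁, u₁), (y₁, v₁), (x₂, u₂), (y₂, v₂), gen _ _ _ _ hGc1 hHc1,
      gen _ _ _ _ hGc2 hHc2, ?_⟩
    ext a
    simp only [Set.mem_inter_iff, Set.mem_singleton_iff]
    constructor
    · rintro ⟨h1, h2⟩
      have e1 : a.1 = 1 := by
        have hm : a.1 ∈ beauvilleSigma x₁ y₁ ∩ beauvilleSigma x₂ y₂ :=
          ⟨sigma_fst h1, sigma_fst h2⟩
        rw [hGs] at hm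
        exact hm
      have e2 : a.2 = 1 := by
        have hm : a.2 ∈ beauvilleSigma u₁ v₁ ∩ beauvilleSigma u₂ v₂ :=
          ⟨sigma_snd h1, sigma_snd h2⟩
        rw [hHs] at hm
        exact hm
      exact Prod.ext e1 e2
    · rintro rfl
      exact ⟨one_mem_sigma _ _, one_mem_sigma _ _⟩
  · -- purely non-strongly real
    rintro a₁ b₁ a₂ b₂ ⟨hc1, hc2, hs⟩ ⟨φ, g₁, g₂, e11, e12, e21, e22⟩
    obtain ⟨ψ, hψ⟩ := exists_psi hco φ
    -- the projected structure is a Beauville structure for G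
    have projgen : ∀ a b : G × H, Subgroup.closure {a, b} = ⊤ →
        Subgroup.closure {a.1, b.1} = ⊤ := by
      intro a b hab
      have h := MonoidHom.map_closure (MonoidHom.fst G H) {a, b}
      rw [hab, Subgroup.map_top_of_surjective _ Prod.fst_surjective, Set.image_pair] at h
      exact h.symm
    have projsigma : beauvilleSigma a₁.1 b₁.1 ∩ beauvilleSigma a₂.1 b₂.1 = {1} := by
      ext c
      simp only [Set.mem_inter_iff, Set.mem_singleton_iff]
      constructor
      · rintro ⟨h1, h2⟩
        have hm : ((c, 1) : G × H) ∈ beauvilleSigma a₁ b₁ ∩ beauvilleSigma a₂ b₂ :=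
          ⟨sigma_lift hN1 hN2 h1, sigma_lift hN1 hN2 h2⟩
        rw [hs] at hm
        exact congrArg Prod.fst hm
      · rintro rfl
        exact ⟨one_mem_sigma _ _, one_mem_sigma _ _⟩
    refine hGpure a₁.1 b₁.1 a₂.1 b₂.1 ⟨projgen _ _ hc1, projgen _ _ hc2, projsigma⟩
      ⟨ψ, g₁.1, g₂.1, ?_, ?_, ?_, ?_⟩
    · have h := congrArg Prod.fst e11
      simpa only [Prod.fst_mul, Prod.fst_inv, hψ] using h
    · have h := congrArg Prod.fst e12
      simpa only [Prod.fst_mul, Prod.fst_inv, hψ] using h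
    · have h := congrArg Prod.fst e21
      simpa only [Prod.fst_mul, Prod.fst_inv, hψ] using h
    · have h := congrArg Prod.fst e22
      simpa only [Prod.fst_mul, Prod.fst_inv, hψ] using h
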